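/- Let μ ∈ (1,2), x ∈ [0,1), and write γ^{i+1}(x) = b_1⋯b_{i+1} and T^i(x) = T(γ^i(x)). (1) If T^i(x) = [v,u) with v < u, then: if v < 1/2 < u and f^i(x) < 1/2, then T^{i+1}(x) = [f(v), f(1/2)) and b_{i+1} = 0; if v < 1/2 < u and f^i(x) ≥ 1/2, then T^{i+1}(x) = (f(u), f(1/2)] and b_{i+1} = 1; if u ≤ 1/2, then T^{i+1}(x) = [f(v), f(u)) and b_{i+1} = 0; if v ≥ 1/2, then T^{i+1}(x) = (f(u), f(v)] and b_{i+1} = 1. (2) If T^i(x) = (v,u] with v < u, then: if v < 1/2 < u and f^i(x) ≤ 1/2, then T^{i+1}(x) = (f(v), f(1/2)] and b_{i+1} = 1; if v < 1/2 < u and f^i(x) > 1/2, then T^{i+1}(x) = [f(u), f(1/2)) and b_{i+1} = 0; if u ≤ 1/2, then T^{i+1}(x) = (f(v), f(u)] and b_{i+1} = 1; if v ≥ 1/2, then T^{i+1}(x) = [f(u), f(v)) and b_{i+1} = 0. -/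
import Mathlib


open Set MeasureTheory

/-- The tent map `f(x) = μx` for `x ≤ 1/2` and `μ(1-x)` for `x ≥ 1/2`. -/
noncomputable def tentMap (μ : ℝ) (x : ℝ) : ℝ :=
  if x ≤ 1/2 then μ * x else μ * (1 - x)

/-- `tentBit μ x k` is the `(k+1)`-st bit `b_{k+1}` of the tent code of `x`. -/
noncomputable def tentBit (μ x : ℝ) : ℕ → Bool
  | 0 => if 1/2 ≤ x then true else false
  | k + 1 =>
    if (tentMap μ)^[k+1] x < 1/2 then tentBit μ x k
    else if 1/2 < (tentMap μ)^[k+1] x then !(tentBit μ x k)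
    else true

/-- The tent code `γ^n(x) = b_1 ⋯ b_n`. -/
noncomputable def tentCode (μ : ℝ) (n : ℕ) (x : ℝ) : List Bool :=
  (List.range n).map (tentBit μ x)

/-- The tent language `L_n = {γ^n(x) : x ∈ [0,1)}`. -/
def tentLang (μ : ℝ) (n : ℕ) : Set (List Bool) :=
  {w | ∃ x ∈ Set.Ico (0:ℝ) 1, tentCode μ n x = w}

/-- The segment-type `T(w) = {f^n(x) : x ∈ [0,1), γ^n(x) = w}`. -/
def segType (μ : ℝ) (n : ℕ) (w : List Bool) : Set ℝ :=
  {y | ∃ x ∈ Set.Ico (0:ℝ) 1, tentCode μ n x = w ∧ (tentMap μ)^[n] x = y}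

/-- The set of segment-types `𝒯_n = {T(w) : w ∈ L_n}`. -/
def typeSet (μ : ℝ) (n : ℕ) : Set (Set ℝ) :=
  {S | ∃ w ∈ tentLang μ n, segType μ n w = S}

/-- `I_i = T(γ^i(1/2))`. -/
noncomputable def Iseg (μ : ℝ) (i : ℕ) : Set ℝ :=
  segType μ i (tentCode μ i (1/2))

/-- `Ī_i = T(c̄_i)` where `c̄_i` is the bitwise complement of `γ^i(1/2)`. -/
noncomputable def Isegbar (μ : ℝ) (i : ℕ) : Set ℝ :=
  segType μ i ((tentCode μ i (1/2)).map (fun b => !b))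

/-- The length of the interval `T(w)` (zero if `T(w)` is empty). -/
noncomputable def segLen (μ : ℝ) (n : ℕ) (w : List Bool) : ℝ :=
  (MeasureTheory.volume (segType μ n w)).toReal

noncomputable def nextBit (p : Bool) (y : ℝ) : Bool :=
  if y < 1/2 then p else if 1/2 < y then !p else true

noncomputable def prevBit (μ x : ℝ) : ℕ → Bool
  | 0 => false
  | k + 1 => tentBit μ x k

lemma nextBit_false_iff_false {y : ℝ} : nextBit false y = false ↔ y < 1/2 := by
  unfold nextBit; split_ifs <;> simp_all

lemma nextBit_false_iff_true {y : ℝ} : nextBit false y = true ↔ 1/2 ≤ y := by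
  unfold nextBit; split_ifs <;> simp_all <;> linarith

lemma nextBit_true_iff_true {y : ℝ} : nextBit true y = true ↔ y ≤ 1/2 := by
  unfold nextBit; split_ifs <;> simp_all <;> linarith

lemma nextBit_true_iff_false {y : ℝ} : nextBit true y = false ↔ 1/2 < y := by
  unfold nextBit; split_ifs <;> simp_all <;> linarith

lemma tentBit_eq_nextBit (μ x : ℝ) (n : ℕ) :
    tentBit μ x n = nextBit (prevBit μ x n) ((tentMap μ)^[n] x) := by
  cases n with
  | zero =>
    simp only [prevBit, Function.iterate_zero, id_eq, tentBit, nextBit]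
    split_ifs <;> simp_all <;> linarith
  | succ k => rfl

lemma tentCode_eq_iff {μ : ℝ} {n : ℕ} {z x : ℝ} :
    tentCode μ n z = tentCode μ n x ↔ ∀ j < n, tentBit μ z j = tentBit μ x j := by
  simp [tentCode, List.map_inj_left]

lemma prevBit_eq_of_code {μ : ℝ} {n : ℕ} {z x : ℝ}
    (h : tentCode μ n z = tentCode μ n x) : prevBit μ z n = prevBit μ x n := by
  cases n with
  | zero => rfl
  | succ k => exact tentCode_eq_iff.mp h k (Nat.lt_succ_self k)

lemma tentCode_succ_iff {μ : ℝ} {n : ℕ} {z x : ℝ} :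
    tentCode μ (n+1) z = tentCode μ (n+1) x ↔
      tentCode μ n z = tentCode μ n x ∧ tentBit μ z n = tentBit μ x n := by
  simp only [tentCode_eq_iff]
  constructor
  · exact fun h => ⟨fun j hj => h j (hj.trans (Nat.lt_succ_self n)), h n (Nat.lt_succ_self n)⟩
  · rintro ⟨h1, h2⟩ j hj
    rcases Nat.lt_succ_iff_lt_or_eq.mp hj with h | rfl
    · exact h1 j h
    · exact h2

lemma mem_segType_self {μ x : ℝ} (hx : x ∈ Set.Ico (0:ℝ) 1) (n : ℕ) :
    (tentMap μ)^[n] x ∈ segType μ n (tentCode μ n x) :=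
  ⟨x, hx, rfl, rfl⟩

lemma segType_succ (μ x : ℝ) (n : ℕ) :
    segType μ (n+1) (tentCode μ (n+1) x) =
      tentMap μ '' (segType μ n (tentCode μ n x) ∩
        {y | nextBit (prevBit μ x n) y = tentBit μ x n}) := by
  ext y
  constructor
  · rintro ⟨z, hz, hcode, rfl⟩
    rw [tentCode_succ_iff] at hcode
    refine ⟨(tentMap μ)^[n] z, ⟨⟨z, hz, hcode.1, rfl⟩, ?_⟩,
      (Function.iterate_succ_apply' _ _ _).symm⟩
    show nextBit (prevBit μ x n) ((tentMap μ)^[n] z) = tentBit μ x n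
    rw [← prevBit_eq_of_code hcode.1, ← tentBit_eq_nextBit]
    exact hcode.2
  · rintro ⟨y', ⟨⟨z, hz, hcode, rfl⟩, hcond⟩, rfl⟩
    refine ⟨z, hz, ?_, Function.iterate_succ_apply' _ _ _⟩
    rw [tentCode_succ_iff]
    refine ⟨hcode, ?_⟩
    rw [tentBit_eq_nextBit μ z n, prevBit_eq_of_code hcode]
    exact hcond

lemma segType_zero (μ x : ℝ) : segType μ 0 (tentCode μ 0 x) = Set.Ico 0 1 := by
  ext y
  simp [segType, tentCode, Set.mem_Ico]

lemma tentMap_of_le {μ y : ℝ} (h : y ≤ 1/2) : tentMap μ y = μ * y := if_pos h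

lemma tentMap_of_ge {μ y : ℝ} (h : 1/2 ≤ y) : tentMap μ y = μ * (1 - y) := by
  unfold tentMap
  split_ifs with h'
  · have : y = 1/2 := le_antisymm h' h
    rw [this]; ring
  · rfl

lemma tentMap_image_Ico_le {μ v w : ℝ} (hμ : 0 < μ) (hw : w ≤ 1/2) :
    tentMap μ '' Set.Ico v w = Set.Ico (μ * v) (μ * w) := by
  rw [show tentMap μ '' Set.Ico v w = (μ * ·) '' Set.Ico v w from
    Set.image_congr fun y hy => tentMap_of_le ((lt_of_lt_of_le hy.2 hw).le)]
  exact Set.image_mul_left_Ico hμ v w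

lemma tentMap_image_Ioc_le {μ v w : ℝ} (hμ : 0 < μ) (hw : w ≤ 1/2) :
    tentMap μ '' Set.Ioc v w = Set.Ioc (μ * v) (μ * w) := by
  rw [show tentMap μ '' Set.Ioc v w = (μ * ·) '' Set.Ioc v w from
    Set.image_congr fun y hy => tentMap_of_le (hy.2.trans hw)]
  exact Set.image_mul_left_Ioc hμ v w

lemma tentMap_image_Ico_ge {μ v w : ℝ} (hμ : 0 < μ) (hv : 1/2 ≤ v) :
    tentMap μ '' Set.Ico v w = Set.Ioc (μ * (1 - w)) (μ * (1 - v)) := by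
  have h1 : tentMap μ '' Set.Ico v w = ((μ * ·) ∘ (fun y => 1 - y)) '' Set.Ico v w :=
    Set.image_congr fun y hy => tentMap_of_ge (hv.trans hy.1)
  rw [h1, Set.image_comp, Set.image_const_sub_Ico, Set.image_mul_left_Ioc hμ]

lemma tentMap_image_Ioc_ge {μ v w : ℝ} (hμ : 0 < μ) (hv : 1/2 ≤ v) :
    tentMap μ '' Set.Ioc v w = Set.Ico (μ * (1 - w)) (μ * (1 - v)) := by
  have h1 : tentMap μ '' Set.Ioc v w = ((μ * ·) ∘ (fun y => 1 - y)) '' Set.Ioc v w :=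
    Set.image_congr fun y hy => tentMap_of_ge (hv.trans hy.1.le)
  rw [h1, Set.image_comp, Set.image_const_sub_Ioc, Set.image_mul_left_Ico hμ]

lemma Ico_ne_Ioc' {v u v' u' : ℝ} (h : v < u) (h' : v' < u') :
    Set.Ico v u ≠ Set.Ioc v' u' := by
  intro he
  have h1 : v ∈ Set.Ioc v' u' := he ▸ Set.mem_Ico.mpr ⟨le_refl v, h⟩
  have hvv : v' < v := h1.1
  have hmin : v' < min v u' := lt_min hvv h'
  set t := (v' + min v u') / 2 with ht
  have ht1 : v' < t := by rw [ht]; linarith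
  have ht2 : t < min v u' := by rw [ht]; linarith
  have htIoc : t ∈ Set.Ioc v' u' := ⟨ht1, (ht2.trans_le (min_le_right _ _)).le⟩
  rw [← he] at htIoc
  exact absurd htIoc.1 (not_le.mpr (ht2.trans_le (min_le_left _ _)))

lemma step_Ico {μ x : ℝ} (hμ : 0 < μ) (hx : x ∈ Set.Ico (0:ℝ) 1) {i : ℕ} {v u : ℝ}
    (hvu : v < u) (hseg : segType μ i (tentCode μ i x) = Set.Ico v u)
    (hprev : prevBit μ x i = false) :
    ((v < 1/2 → 1/2 < u → (tentMap μ)^[i] x < 1/2 →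
        segType μ (i+1) (tentCode μ (i+1) x)
            = Set.Ico (tentMap μ v) (tentMap μ (1/2)) ∧
          tentBit μ x i = false) ∧
     (v < 1/2 → 1/2 < u → 1/2 ≤ (tentMap μ)^[i] x →
        segType μ (i+1) (tentCode μ (i+1) x)
            = Set.Ioc (tentMap μ u) (tentMap μ (1/2)) ∧
          tentBit μ x i = true) ∧
     (u ≤ 1/2 →
        segType μ (i+1) (tentCode μ (i+1) x)
            = Set.Ico (tentMap μ v) (tentMap μ u) ∧
          tentBit μ x i = false) ∧
     (1/2 ≤ v →
        segType μ (i+1) (tentCode μ (i+1) x)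
            = Set.Ioc (tentMap μ u) (tentMap μ v) ∧
          tentBit μ x i = true)) := by
  have hmem : (tentMap μ)^[i] x ∈ Set.Ico v u := hseg ▸ mem_segType_self hx i
  have hb : tentBit μ x i = nextBit false ((tentMap μ)^[i] x) := by
    rw [tentBit_eq_nextBit, hprev]
  have hS : segType μ (i+1) (tentCode μ (i+1) x)
      = tentMap μ '' (Set.Ico v u ∩ {y | nextBit false y = tentBit μ x i}) := by
    rw [segType_succ, hseg, hprev]
  refine ⟨?_, ?_, ?_, ?_⟩
  · intro hv hu hcx
    have hbit : tentBit μ x i = false := by rw [hb]; exact nextBit_false_iff_false.mpr hcx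
    refine ⟨?_, hbit⟩
    rw [hS, hbit]
    have hset : Set.Ico v u ∩ {y : ℝ | nextBit false y = false} = Set.Ico v (1/2) := by
      ext y
      simp only [Set.mem_inter_iff, Set.mem_Ico, Set.mem_setOf_eq, nextBit_false_iff_false]
      constructor
      · rintro ⟨⟨h1, _⟩, h3⟩; exact ⟨h1, h3⟩
      · rintro ⟨h1, h2⟩; exact ⟨⟨h1, h2.trans hu⟩, h2⟩
    rw [hset, tentMap_image_Ico_le hμ le_rfl, tentMap_of_le hv.le, tentMap_of_le le_rfl]
  · intro hv hu hcx
    have hbit : tentBit μ x i = true := by rw [hb]; exact nextBit_false_iff_true.mpr hcx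
    refine ⟨?_, hbit⟩
    rw [hS, hbit]
    have hset : Set.Ico v u ∩ {y : ℝ | nextBit false y = true} = Set.Ico (1/2) u := by
      ext y
      simp only [Set.mem_inter_iff, Set.mem_Ico, Set.mem_setOf_eq, nextBit_false_iff_true]
      constructor
      · rintro ⟨⟨_, h2⟩, h3⟩; exact ⟨h3, h2⟩
      · rintro ⟨h1, h2⟩; exact ⟨⟨hv.le.trans h1, h2⟩, h1⟩
    rw [hset, tentMap_image_Ico_ge hμ le_rfl, tentMap_of_ge hu.le, tentMap_of_ge le_rfl]
  · intro hu
    have hcx : (tentMap μ)^[i] x < 1/2 := lt_of_lt_of_le hmem.2 hu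
    have hbit : tentBit μ x i = false := by rw [hb]; exact nextBit_false_iff_false.mpr hcx
    refine ⟨?_, hbit⟩
    rw [hS, hbit]
    have hset : Set.Ico v u ∩ {y : ℝ | nextBit false y = false} = Set.Ico v u := by
      ext y
      simp only [Set.mem_inter_iff, Set.mem_Ico, Set.mem_setOf_eq, nextBit_false_iff_false]
      exact ⟨fun h => h.1, fun h => ⟨h, lt_of_lt_of_le h.2 hu⟩⟩
    rw [hset, tentMap_image_Ico_le hμ hu, tentMap_of_le (hvu.le.trans hu), tentMap_of_le hu]
  · intro hv
    have hcx : 1/2 ≤ (tentMap μ)^[i] x := hv.trans hmem.1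
    have hbit : tentBit μ x i = true := by rw [hb]; exact nextBit_false_iff_true.mpr hcx
    refine ⟨?_, hbit⟩
    rw [hS, hbit]
    have hset : Set.Ico v u ∩ {y : ℝ | nextBit false y = true} = Set.Ico v u := by
      ext y
      simp only [Set.mem_inter_iff, Set.mem_Ico, Set.mem_setOf_eq, nextBit_false_iff_true]
      exact ⟨fun h => h.1, fun h => ⟨h, hv.trans h.1⟩⟩
    rw [hset, tentMap_image_Ico_ge hμ hv, tentMap_of_ge (hv.trans hvu.le), tentMap_of_ge hv]

lemma step_Ioc {μ x : ℝ} (hμ : 0 < μ) (hx : x ∈ Set.Ico (0:ℝ) 1) {i : ℕ} {v u : ℝ}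
    (hvu : v < u) (hseg : segType μ i (tentCode μ i x) = Set.Ioc v u)
    (hprev : prevBit μ x i = true) :
    ((v < 1/2 → 1/2 < u → (tentMap μ)^[i] x ≤ 1/2 →
        segType μ (i+1) (tentCode μ (i+1) x)
            = Set.Ioc (tentMap μ v) (tentMap μ (1/2)) ∧
          tentBit μ x i = true) ∧
     (v < 1/2 → 1/2 < u → 1/2 < (tentMap μ)^[i] x →
        segType μ (i+1) (tentCode μ (i+1) x)
            = Set.Ico (tentMap μ u) (tentMap μ (1/2)) ∧
          tentBit μ x i = false) ∧
     (u ≤ 1/2 →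
        segType μ (i+1) (tentCode μ (i+1) x)
            = Set.Ioc (tentMap μ v) (tentMap μ u) ∧
          tentBit μ x i = true) ∧
     (1/2 ≤ v →
        segType μ (i+1) (tentCode μ (i+1) x)
            = Set.Ico (tentMap μ u) (tentMap μ v) ∧
          tentBit μ x i = false)) := by
  have hmem : (tentMap μ)^[i] x ∈ Set.Ioc v u := hseg ▸ mem_segType_self hx i
  have hb : tentBit μ x i = nextBit true ((tentMap μ)^[i] x) := by
    rw [tentBit_eq_nextBit, hprev]
  have hS : segType μ (i+1) (tentCode μ (i+1) x)
      = tentMap μ '' (Set.Ioc v u ∩ {y | nextBit true y = tentBit μ x i}) := by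
    rw [segType_succ, hseg, hprev]
  refine ⟨?_, ?_, ?_, ?_⟩
  · intro hv hu hcx
    have hbit : tentBit μ x i = true := by rw [hb]; exact nextBit_true_iff_true.mpr hcx
    refine ⟨?_, hbit⟩
    rw [hS, hbit]
    have hset : Set.Ioc v u ∩ {y : ℝ | nextBit true y = true} = Set.Ioc v (1/2) := by
      ext y
      simp only [Set.mem_inter_iff, Set.mem_Ioc, Set.mem_setOf_eq, nextBit_true_iff_true]
      constructor
      · rintro ⟨⟨h1, _⟩, h3⟩; exact ⟨h1, h3⟩
      · rintro ⟨h1, h2⟩; exact ⟨⟨h1, h2.trans hu.le⟩, h2⟩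
    rw [hset, tentMap_image_Ioc_le hμ le_rfl, tentMap_of_le hv.le, tentMap_of_le le_rfl]
  · intro hv hu hcx
    have hbit : tentBit μ x i = false := by rw [hb]; exact nextBit_true_iff_false.mpr hcx
    refine ⟨?_, hbit⟩
    rw [hS, hbit]
    have hset : Set.Ioc v u ∩ {y : ℝ | nextBit true y = false} = Set.Ioc (1/2) u := by
      ext y
      simp only [Set.mem_inter_iff, Set.mem_Ioc, Set.mem_setOf_eq, nextBit_true_iff_false]
      constructor
      · rintro ⟨⟨_, h2⟩, h3⟩; exact ⟨h3, h2⟩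
      · rintro ⟨h1, h2⟩; exact ⟨⟨hv.trans h1, h2⟩, h1⟩
    rw [hset, tentMap_image_Ioc_ge hμ le_rfl, tentMap_of_ge hu.le, tentMap_of_ge le_rfl]
  · intro hu
    have hcx : (tentMap μ)^[i] x ≤ 1/2 := hmem.2.trans hu
    have hbit : tentBit μ x i = true := by rw [hb]; exact nextBit_true_iff_true.mpr hcx
    refine ⟨?_, hbit⟩
    rw [hS, hbit]
    have hset : Set.Ioc v u ∩ {y : ℝ | nextBit true y = true} = Set.Ioc v u := by
      ext y
      simp only [Set.mem_inter_iff, Set.mem_Ioc, Set.mem_setOf_eq, nextBit_true_iff_true]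
      exact ⟨fun h => h.1, fun h => ⟨h, h.2.trans hu⟩⟩
    rw [hset, tentMap_image_Ioc_le hμ hu, tentMap_of_le (hvu.le.trans hu), tentMap_of_le hu]
  · intro hv
    have hcx : 1/2 < (tentMap μ)^[i] x := lt_of_le_of_lt hv hmem.1
    have hbit : tentBit μ x i = false := by rw [hb]; exact nextBit_true_iff_false.mpr hcx
    refine ⟨?_, hbit⟩
    rw [hS, hbit]
    have hset : Set.Ioc v u ∩ {y : ℝ | nextBit true y = false} = Set.Ioc v u := by
      ext y
      simp only [Set.mem_inter_iff, Set.mem_Ioc, Set.mem_setOf_eq, nextBit_true_iff_false]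
      exact ⟨fun h => h.1, fun h => ⟨h, lt_of_le_of_lt hv h.1⟩⟩
    rw [hset, tentMap_image_Ioc_ge hμ hv, tentMap_of_ge (hv.trans hvu.le), tentMap_of_ge hv]

lemma shape_segType {μ x : ℝ} (hμ : 0 < μ) (hx : x ∈ Set.Ico (0:ℝ) 1) (i : ℕ) :
    (∃ v u : ℝ, v < u ∧ segType μ i (tentCode μ i x) = Set.Ico v u ∧ prevBit μ x i = false) ∨
    (∃ v u : ℝ, v < u ∧ segType μ i (tentCode μ i x) = Set.Ioc v u ∧ prevBit μ x i = true) := by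
  induction i with
  | zero => exact Or.inl ⟨0, 1, one_pos, segType_zero μ x, rfl⟩
  | succ k ih =>
    rcases ih with ⟨v, u, hvu, hseg, hp⟩ | ⟨v, u, hvu, hseg, hp⟩
    · obtain ⟨P1, P2, P3, P4⟩ := step_Ico hμ hx hvu hseg hp
      rcases le_or_gt u (1/2) with h | h
      · obtain ⟨hS, hb⟩ := P3 h
        refine Or.inl ⟨_, _, ?_, hS, hb⟩
        rw [tentMap_of_le (hvu.le.trans h), tentMap_of_le h]
        exact mul_lt_mul_of_pos_left hvu hμ
      · rcases le_or_gt (1/2) v with h2 | h2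
        · obtain ⟨hS, hb⟩ := P4 h2
          refine Or.inr ⟨_, _, ?_, hS, hb⟩
          rw [tentMap_of_ge (h2.trans hvu.le), tentMap_of_ge h2]
          exact mul_lt_mul_of_pos_left (by linarith) hμ
        · rcases lt_or_ge ((tentMap μ)^[k] x) (1/2) with h3 | h3
          · obtain ⟨hS, hb⟩ := P1 h2 h h3
            refine Or.inl ⟨_, _, ?_, hS, hb⟩
            rw [tentMap_of_le h2.le, tentMap_of_le le_rfl]
            exact mul_lt_mul_of_pos_left h2 hμ
          · obtain ⟨hS, hb⟩ := P2 h2 h h3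
            refine Or.inr ⟨_, _, ?_, hS, hb⟩
            rw [tentMap_of_ge h.le, tentMap_of_ge le_rfl]
            exact mul_lt_mul_of_pos_left (by linarith) hμ
    · obtain ⟨P1, P2, P3, P4⟩ := step_Ioc hμ hx hvu hseg hp
      rcases le_or_gt u (1/2) with h | h
      · obtain ⟨hS, hb⟩ := P3 h
        refine Or.inr ⟨_, _, ?_, hS, hb⟩
        rw [tentMap_of_le (hvu.le.trans h), tentMap_of_le h]
        exact mul_lt_mul_of_pos_left hvu hμ
      · rcases le_or_gt (1/2) v with h2 | h2
        · obtain ⟨hS, hb⟩ := P4 h2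
          refine Or.inl ⟨_, _, ?_, hS, hb⟩
          rw [tentMap_of_ge (h2.trans hvu.le), tentMap_of_ge h2]
          exact mul_lt_mul_of_pos_left (by linarith) hμ
        · rcases le_or_gt ((tentMap μ)^[k] x) (1/2) with h3 | h3
          · obtain ⟨hS, hb⟩ := P1 h2 h h3
            refine Or.inr ⟨_, _, ?_, hS, hb⟩
            rw [tentMap_of_le h2.le, tentMap_of_le le_rfl]
            exact mul_lt_mul_of_pos_left h2 hμ
          · obtain ⟨hS, hb⟩ := P2 h2 h h3
            refine Or.inl ⟨_, _, ?_, hS, hb⟩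
            rw [tentMap_of_ge h.le, tentMap_of_ge le_rfl]
            exact mul_lt_mul_of_pos_left (by linarith) hμ

/-- the transition rule for segment-types. -/
theorem segType_transition (μ : ℝ) (hμ1 : 1 < μ) (hμ2 : μ < 2)
    (x : ℝ) (hx : x ∈ Set.Ico (0:ℝ) 1) (i : ℕ) (v u : ℝ) (hvu : v < u) :
    (segType μ i (tentCode μ i x) = Set.Ico v u →
      ((v < 1/2 → 1/2 < u → (tentMap μ)^[i] x < 1/2 →
          segType μ (i+1) (tentCode μ (i+1) x)
              = Set.Ico (tentMap μ v) (tentMap μ (1/2)) ∧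
            tentBit μ x i = false) ∧
       (v < 1/2 → 1/2 < u → 1/2 ≤ (tentMap μ)^[i] x →
          segType μ (i+1) (tentCode μ (i+1) x)
              = Set.Ioc (tentMap μ u) (tentMap μ (1/2)) ∧
            tentBit μ x i = true) ∧
       (u ≤ 1/2 →
          segType μ (i+1) (tentCode μ (i+1) x)
              = Set.Ico (tentMap μ v) (tentMap μ u) ∧
            tentBit μ x i = false) ∧
       (1/2 ≤ v →
          segType μ (i+1) (tentCode μ (i+1) x)
              = Set.Ioc (tentMap μ u) (tentMap μ v) ∧
            tentBit μ x i = true))) ∧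
    (segType μ i (tentCode μ i x) = Set.Ioc v u →
      ((v < 1/2 → 1/2 < u → (tentMap μ)^[i] x ≤ 1/2 →
          segType μ (i+1) (tentCode μ (i+1) x)
              = Set.Ioc (tentMap μ v) (tentMap μ (1/2)) ∧
            tentBit μ x i = true) ∧
       (v < 1/2 → 1/2 < u → 1/2 < (tentMap μ)^[i] x →
          segType μ (i+1) (tentCode μ (i+1) x)
              = Set.Ico (tentMap μ u) (tentMap μ (1/2)) ∧
            tentBit μ x i = false) ∧
       (u ≤ 1/2 →
          segType μ (i+1) (tentCode μ (i+1) x)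
              = Set.Ioc (tentMap μ v) (tentMap μ u) ∧
            tentBit μ x i = true) ∧
       (1/2 ≤ v →
          segType μ (i+1) (tentCode μ (i+1) x)
              = Set.Ico (tentMap μ u) (tentMap μ v) ∧
            tentBit μ x i = false))) := by
  have hμ : (0:ℝ) < μ := lt_trans one_pos hμ1
  constructor
  · intro hseg
    have hprev : prevBit μ x i = false := by
      rcases shape_segType hμ hx i with ⟨v', u', h', _, hp⟩ | ⟨v', u', h', hseg', hp⟩
      · exact hp
      · exact absurd (hseg.symm.trans hseg') (Ico_ne_Ioc' hvu h')
    exact step_Ico hμ hx hvu hseg hprev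
  · intro hseg
    have hprev : prevBit μ x i = true := by
      rcases shape_segType hμ hx i with ⟨v', u', h', hseg', hp⟩ | ⟨v', u', h', _, hp⟩
      · exact absurd (hseg'.symm.trans hseg) (Ico_ne_Ioc' h' hvu)
      · exact hp
    exact step_Ioc hμ hx hvu hseg hprev
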